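/- Let (A,Δ) be an algebraic quantum group, B a non-degenerate algebra, and V a non-degenerate (invertible) corepresentation of (A,Δ) on B. Then (S⊙ι)(V) = V⁻¹, where (S⊙ι)(V) is the unique multiplier satisfying (S⊙ι)(V)(a⊗b) = (S⊙ι)((S⁻¹(a)⊗1)V(1⊗b)) for all a ∈ A, b ∈ B. -/

import Mathlib

open TensorProduct LinearMap

noncomputable section

/-- Slice on the left leg: `sliceL θ (x ⊗ y) = θ x • y`, i.e. `(θ ⊙ ι)`. -/
def sliceL {M N : Type*} [AddCommGroup M] [Module ℂ M] [AddCommGroup N] [Module ℂ N]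
    (θ : M →ₗ[ℂ] ℂ) : M ⊗[ℂ] N →ₗ[ℂ] N :=
  TensorProduct.lift (LinearMap.lsmul ℂ N ∘ₗ θ)

/-- Slice on the right leg: `sliceR θ (x ⊗ y) = θ y • x`, i.e. `(ι ⊙ θ)`. -/
def sliceR {M N : Type*} [AddCommGroup M] [Module ℂ M] [AddCommGroup N] [Module ℂ N]
    (θ : N →ₗ[ℂ] ℂ) : M ⊗[ℂ] N →ₗ[ℂ] M :=
  TensorProduct.lift ((LinearMap.lsmul ℂ M ∘ₗ θ).flip)

/-- An algebraic quantum group: a regular multiplier Hopf algebra `(A, Δ)` with a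
(faithful) left invariant functional `φ`.  The comultiplication is encoded through the
canonical bijections `T1 a ⊗ b = Δ(a)(b ⊗ 1)`, `T2 (a ⊗ b) = Δ(a)(1 ⊗ b)`,
`T3 (a ⊗ b) = (b ⊗ 1)Δ(a)`, `T4 (a ⊗ b) = (1 ⊗ b)Δ(a)` together with the left and right
multiplication operators `ΔL a`/`ΔR a` by `Δ(a)` on `A ⊗ A`. -/
structure AQG (A : Type*) [NonUnitalRing A] [Module ℂ A]
    [SMulCommClass ℂ A A] [IsScalarTower ℂ A A] where
  T1 : A ⊗[ℂ] A ≃ₗ[ℂ] A ⊗[ℂ] A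
  T2 : A ⊗[ℂ] A ≃ₗ[ℂ] A ⊗[ℂ] A
  T3 : A ⊗[ℂ] A ≃ₗ[ℂ] A ⊗[ℂ] A
  T4 : A ⊗[ℂ] A ≃ₗ[ℂ] A ⊗[ℂ] A
  counit : A →ₗ[ℂ] ℂ
  S : A ≃ₗ[ℂ] A
  phi : A →ₗ[ℂ] ℂ
  rho : A ≃ₗ[ℂ] A
  ΔL : A →ₗ[ℂ] (A ⊗[ℂ] A →ₗ[ℂ] A ⊗[ℂ] A)
  ΔR : A →ₗ[ℂ] (A ⊗[ℂ] A →ₗ[ℂ] A ⊗[ℂ] A)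
  /- non-degeneracy of the algebra `A` -/
  nondeg_l : ∀ a : A, (∀ b : A, a * b = 0) → a = 0
  nondeg_r : ∀ a : A, (∀ b : A, b * a = 0) → a = 0
  /- the counit is a non-zero homomorphism with `(ε ⊙ ι)Δ = (ι ⊙ ε)Δ = ι` -/
  counit_mul : ∀ a b : A, counit (a * b) = counit a * counit b
  counit_ne : counit ≠ 0
  counit_T1 : ∀ a b : A, sliceR counit (T1 (a ⊗ₜ b)) = a * b
  counit_T2 : ∀ a b : A, sliceL counit (T2 (a ⊗ₜ b)) = a * b
  counit_T3 : ∀ a b : A, sliceR counit (T3 (a ⊗ₜ b)) = b * a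
  counit_T4 : ∀ a b : A, sliceL counit (T4 (a ⊗ₜ b)) = b * a
  /- the antipode -/
  S_mul : ∀ a b : A, S (a * b) = S b * S a
  antipode_l : ∀ a b : A,
    LinearMap.mul' ℂ A (LinearMap.rTensor A S.toLinearMap (T2 (a ⊗ₜ b))) = counit a • b
  antipode_r : ∀ a b : A,
    LinearMap.mul' ℂ A (LinearMap.lTensor A S.toLinearMap (T3 (a ⊗ₜ b))) = counit a • b
  /- `φ` is a faithful left invariant functional -/
  phi_ne : phi ≠ 0
  phi_faithful_l : ∀ a : A, (∀ b : A, phi (a * b) = 0) → a = 0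
  phi_faithful_r : ∀ a : A, (∀ b : A, phi (b * a) = 0) → a = 0
  left_inv_T1 : ∀ a b : A, sliceR phi (T1 (a ⊗ₜ b)) = phi a • b
  left_inv_T3 : ∀ a b : A, sliceR phi (T3 (a ⊗ₜ b)) = phi a • b
  /- the weak KMS automorphism `ρ`: `φ(ab) = φ(b ρ(a))` -/
  rho_mul : ∀ a b : A, rho (a * b) = rho a * rho b
  phi_kms : ∀ a b : A, phi (a * b) = phi (b * rho a)
  /- `Δ` is a (non-degenerate) homomorphism into `M(A ⊗ A)` -/
  ΔL_mul : ∀ (a b : A) (z : A ⊗[ℂ] A), ΔL (a * b) z = ΔL a (ΔL b z)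
  ΔR_mul : ∀ (a b : A) (z : A ⊗[ℂ] A), ΔR (a * b) z = ΔR b (ΔR a z)
  ΔL_assoc : ∀ (a : A) (z w : A ⊗[ℂ] A), ΔL a (z * w) = ΔL a z * w
  ΔR_assoc : ∀ (a : A) (z w : A ⊗[ℂ] A), ΔR a (z * w) = z * ΔR a w
  ΔLR : ∀ (a : A) (z w : A ⊗[ℂ] A), ΔR a z * w = z * ΔL a w
  ΔL_T1 : ∀ (a b : A) (z : A ⊗[ℂ] A),
    T1 (a ⊗ₜ b) * z = ΔL a (TensorProduct.map (LinearMap.mulLeft ℂ b) LinearMap.id z)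
  ΔL_T2 : ∀ (a b : A) (z : A ⊗[ℂ] A),
    T2 (a ⊗ₜ b) * z = ΔL a (TensorProduct.map LinearMap.id (LinearMap.mulLeft ℂ b) z)
  ΔR_T3 : ∀ (a b : A) (z : A ⊗[ℂ] A),
    z * T3 (a ⊗ₜ b) = ΔR a (TensorProduct.map (LinearMap.mulRight ℂ b) LinearMap.id z)
  ΔR_T4 : ∀ (a b : A) (z : A ⊗[ℂ] A),
    z * T4 (a ⊗ₜ b) = ΔR a (TensorProduct.map LinearMap.id (LinearMap.mulRight ℂ b) z)
  /- coassociativity of `Δ` -/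
  coassoc : ∀ a b c : A,
    (TensorProduct.assoc ℂ A A A)
        (LinearMap.rTensor A (T3.toLinearMap ∘ₗ (TensorProduct.mk ℂ A A).flip a)
          (T2 (c ⊗ₜ b)))
      = LinearMap.lTensor A (T2.toLinearMap ∘ₗ (TensorProduct.mk ℂ A A).flip b)
          (T3 (c ⊗ₜ a))

namespace AQG

variable {A : Type*} [NonUnitalRing A] [Module ℂ A]
  [SMulCommClass ℂ A A] [IsScalarTower ℂ A A] (H : AQG A)

/-- The functional `φa : x ↦ φ(x a)`; the dual algebra is `Â = {φa : a ∈ A}`. -/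
def lFun (a : A) : A →ₗ[ℂ] ℂ := H.phi ∘ₗ LinearMap.mulRight ℂ a

/-- The functional `aφ : x ↦ φ(a x)`; also `Â = {aφ : a ∈ A}`. -/
def rFun (a : A) : A →ₗ[ℂ] ℂ := H.phi ∘ₗ LinearMap.mulLeft ℂ a

/-- The right invariant functional `ψ = φ ∘ S`. -/
def psi : A →ₗ[ℂ] ℂ := H.phi ∘ₗ H.S.toLinearMap

/-- The functional `ψa : x ↦ ψ(x a)`. -/
def lFunPsi (a : A) : A →ₗ[ℂ] ℂ := H.psi ∘ₗ LinearMap.mulRight ℂ a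

/-- The right action of `Â` on `A'`: `Ract θ a = θ · (φa)`,
`(θ (φa))(x) = θ((ι ⊙ φa)Δ(x)) = θ((ι ⊙ φ)(Δ(x)(1 ⊗ a)))`. -/
def Ract (θ : A →ₗ[ℂ] ℂ) (a : A) : A →ₗ[ℂ] ℂ :=
  θ ∘ₗ sliceR H.phi ∘ₗ H.T2.toLinearMap ∘ₗ (TensorProduct.mk ℂ A A).flip a

/-- The left action of `Â` on `A'`: `Lact θ a = (φa) · θ`,
`((φa) θ)(x) = θ((φa ⊙ ι)Δ(x)) = θ((φ ⊙ ι)(Δ(x)(a ⊗ 1)))`. -/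
def Lact (θ : A →ₗ[ℂ] ℂ) (a : A) : A →ₗ[ℂ] ℂ :=
  θ ∘ₗ sliceL H.phi ∘ₗ H.T1.toLinearMap ∘ₗ (TensorProduct.mk ℂ A A).flip a

/-- `c = (ι ⊙ θ)Δ(x)` as an element of `A` (a priori it is only a multiplier). -/
def IsRSlice (θ : A →ₗ[ℂ] ℂ) (x c : A) : Prop :=
  (∀ b : A, c * b = sliceR θ (H.T1 (x ⊗ₜ b))) ∧
  (∀ b : A, b * c = sliceR θ (H.T3 (x ⊗ₜ b)))

/-- `c = (θ ⊙ ι)Δ(x)` as an element of `A`. -/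
def IsLSlice (θ : A →ₗ[ℂ] ℂ) (x c : A) : Prop :=
  (∀ b : A, c * b = sliceL θ (H.T2 (x ⊗ₜ b))) ∧
  (∀ b : A, b * c = sliceL θ (H.T4 (x ⊗ₜ b)))

/-- `θ ∈ M(Â)`: all slices `(θ ⊙ ι)Δ(x)` and `(ι ⊙ θ)Δ(x)` belong to `A`. -/
def HasSlices (θ : A →ₗ[ℂ] ℂ) : Prop :=
  ∀ x : A, (∃ c, H.IsRSlice θ x c) ∧ (∃ c, H.IsLSlice θ x c)

end AQG

end

noncomputable section

/-- A (two-sided) multiplier of a non-degenerate algebra `C`. -/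
structure Mult (C : Type*) [NonUnitalRing C] [Module ℂ C]
    [SMulCommClass ℂ C C] [IsScalarTower ℂ C C] where
  L : C →ₗ[ℂ] C
  R : C →ₗ[ℂ] C
  mid : ∀ x y : C, R x * y = x * L y
  Lmul : ∀ x y : C, L (x * y) = L x * y
  Rmul : ∀ x y : C, R (x * y) = x * R y

/-- `W = V⁻¹` in `M(C)`. -/
def Mult.Inverts {C : Type*} [NonUnitalRing C] [Module ℂ C]
    [SMulCommClass ℂ C C] [IsScalarTower ℂ C C] (V W : Mult C) : Prop :=
  (∀ z, V.L (W.L z) = z) ∧ (∀ z, W.L (V.L z) = z) ∧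
  (∀ z, V.R (W.R z) = z) ∧ (∀ z, W.R (V.R z) = z)

namespace AQG

variable {A : Type*} [NonUnitalRing A] [Module ℂ A]
  [SMulCommClass ℂ A A] [IsScalarTower ℂ A A] (H : AQG A)
variable {B : Type*} [NonUnitalRing B] [Module ℂ B]
  [SMulCommClass ℂ B B] [IsScalarTower ℂ B B]

/-- The left action of `(Δ ⊙ ι)(z)` on `A ⊗ A ⊗ B`, for `z ∈ A ⊗ B`:
`(Δ(a) ⊗ b)·(u ⊗ c) = (Δ(a)u) ⊗ (bc)`. -/
def piDL : A ⊗[ℂ] B →ₗ[ℂ] ((A ⊗[ℂ] A) ⊗[ℂ] B →ₗ[ℂ] (A ⊗[ℂ] A) ⊗[ℂ] B) :=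
  TensorProduct.lift
    (((TensorProduct.mapBilinear (RingHom.id ℂ) (A ⊗[ℂ] A) B (A ⊗[ℂ] A) B).comp H.ΔL).compl₂
      (LinearMap.mul ℂ B))

/-- The right action of `(Δ ⊙ ι)(z)` on `A ⊗ A ⊗ B`. -/
def piDR : A ⊗[ℂ] B →ₗ[ℂ] ((A ⊗[ℂ] A) ⊗[ℂ] B →ₗ[ℂ] (A ⊗[ℂ] A) ⊗[ℂ] B) :=
  TensorProduct.lift
    (((TensorProduct.mapBilinear (RingHom.id ℂ) (A ⊗[ℂ] A) B (A ⊗[ℂ] A) B).comp H.ΔR).compl₂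
      ((LinearMap.mul ℂ B).flip))

/-- The leg-numbering map `V ↦ V₂₃` for the left action. -/
def leg23 (f : A ⊗[ℂ] B →ₗ[ℂ] A ⊗[ℂ] B) :
    (A ⊗[ℂ] A) ⊗[ℂ] B →ₗ[ℂ] (A ⊗[ℂ] A) ⊗[ℂ] B :=
  (TensorProduct.assoc ℂ A A B).symm.toLinearMap ∘ₗ
    (LinearMap.lTensor A f) ∘ₗ (TensorProduct.assoc ℂ A A B).toLinearMap

/-- The flip of the first two legs of `A ⊗ A ⊗ B`. -/
def swap12 : (A ⊗[ℂ] A) ⊗[ℂ] B ≃ₗ[ℂ] (A ⊗[ℂ] A) ⊗[ℂ] B :=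
  TensorProduct.congr (TensorProduct.comm ℂ A A) (LinearEquiv.refl ℂ B)

/-- The leg-numbering map `V ↦ V₁₃`. -/
def leg13 (f : A ⊗[ℂ] B →ₗ[ℂ] A ⊗[ℂ] B) :
    (A ⊗[ℂ] A) ⊗[ℂ] B →ₗ[ℂ] (A ⊗[ℂ] A) ⊗[ℂ] B :=
  (swap12 (A := A) (B := B)).toLinearMap ∘ₗ leg23 f ∘ₗ
    (swap12 (A := A) (B := B)).toLinearMap

/-- `V ∈ M(A ⊙ B)` is a corepresentation of `(A, Δ)` on `B`:
`(Δ ⊙ ι)(V) = V₁₃ V₂₃` in `M(A ⊙ A ⊙ B)`, expressed on the (spanning) elements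
`(Δ ⊙ ι)(z) w` and `w (Δ ⊙ ι)(z)`. -/
def IsCorep (V : Mult (A ⊗[ℂ] B)) : Prop :=
  (∀ (z : A ⊗[ℂ] B) (w : (A ⊗[ℂ] A) ⊗[ℂ] B),
    H.piDL (V.L z) w = leg13 V.L (leg23 V.L (H.piDL z w))) ∧
  (∀ (z : A ⊗[ℂ] B) (w : (A ⊗[ℂ] A) ⊗[ℂ] B),
    H.piDR (V.R z) w = leg23 V.R (leg13 V.R (H.piDR z w)))

end AQG

end

noncomputable section
namespace AQGPf

section Slices

variable {M N : Type*} [AddCommGroup M] [Module ℂ M] [AddCommGroup N] [Module ℂ N]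

@[simp] lemma sliceL_tmul (θ : M →ₗ[ℂ] ℂ) (x : M) (y : N) :
    sliceL θ (x ⊗ₜ y) = θ x • y := rfl

@[simp] lemma sliceR_tmul (θ : N →ₗ[ℂ] ℂ) (x : M) (y : N) :
    sliceR θ (x ⊗ₜ y) = θ y • x := rfl

lemma exists_dual {x : M} (hx : x ≠ 0) : ∃ f : M →ₗ[ℂ] ℂ, f x = 1 := by
  obtain ⟨f, hf⟩ := not_forall.mp ((Module.forall_dual_apply_eq_zero_iff ℂ x).not.mpr hx)
  exact ⟨(f x)⁻¹ • f, by simp [inv_mul_cancel₀ hf]⟩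

lemma tmul_left_cancel {x : M} (hx : x ≠ 0) {d d' : N} (h : x ⊗ₜ[ℂ] d = x ⊗ₜ[ℂ] d') :
    d = d' := by
  obtain ⟨f, hf⟩ := exists_dual hx
  have := congrArg (sliceL f) h
  simpa [hf] using this

variable {P : Type*} [AddCommGroup P] [Module ℂ P]

lemma sliceR_map_right (f : N →ₗ[ℂ] ℂ) (h : P →ₗ[ℂ] N) (x : M ⊗[ℂ] P) :
    sliceR f (TensorProduct.map LinearMap.id h x) = sliceR (f ∘ₗ h) x := by
  induction x using TensorProduct.induction_on with
  | zero => simp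
  | tmul a b => simp
  | add u v hu hv => simp [hu, hv]

lemma sliceR_map_left (f : N →ₗ[ℂ] ℂ) (g : M →ₗ[ℂ] M) (x : M ⊗[ℂ] N) :
    sliceR f (TensorProduct.map g LinearMap.id x) = g (sliceR f x) := by
  induction x using TensorProduct.induction_on with
  | zero => simp
  | tmul a b => simp
  | add u v hu hv => simp [hu, hv]

lemma sliceL_map_left (f : M →ₗ[ℂ] ℂ) (g : P →ₗ[ℂ] M) (x : P ⊗[ℂ] N) :
    sliceL f (TensorProduct.map g LinearMap.id x) = sliceL (f ∘ₗ g) x := by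
  induction x using TensorProduct.induction_on with
  | zero => simp
  | tmul a b => simp
  | add u v hu hv => simp [hu, hv]

lemma sliceL_map_right (f : M →ₗ[ℂ] ℂ) (h : N →ₗ[ℂ] N) (x : M ⊗[ℂ] N) :
    sliceL f (TensorProduct.map LinearMap.id h x) = h (sliceL f x) := by
  induction x using TensorProduct.induction_on with
  | zero => simp
  | tmul a b => simp
  | add u v hu hv => simp [hu, hv]

/-- Separation by functionals on the right leg. -/
lemma sep_right {y : M ⊗[ℂ] N} (h : ∀ f : N →ₗ[ℂ] ℂ, sliceR f y = 0) : y = 0 := by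
  classical
  let c := Module.Basis.ofVectorSpace ℂ N
  let e : M ⊗[ℂ] N ≃ₗ[ℂ] M ⊗[ℂ] (Module.Basis.ofVectorSpaceIndex ℂ N →₀ ℂ) :=
    TensorProduct.congr (LinearEquiv.refl ℂ M) c.repr
  have key : ∀ (i) (z : M ⊗[ℂ] N),
      TensorProduct.finsuppScalarRight ℂ ℂ M _ (e z) i = sliceR (c.coord i) z := by
    intro i z
    induction z using TensorProduct.induction_on with
    | zero => simp
    | tmul a b =>
        simp [e, TensorProduct.finsuppScalarRight_apply_tmul_apply, Module.Basis.coord_apply]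
    | add u v hu hv => simp [map_add, hu, hv]
  have : e y = 0 := by
    apply (TensorProduct.finsuppScalarRight ℂ ℂ M _).injective
    ext i
    simp [key i y, h (c.coord i)]
  simpa using (map_eq_zero_iff e e.injective).mp this

/-- Separation by functionals on the left leg. -/
lemma sep_left {y : M ⊗[ℂ] N} (h : ∀ f : M →ₗ[ℂ] ℂ, sliceL f y = 0) : y = 0 := by
  classical
  let c := Module.Basis.ofVectorSpace ℂ M
  let e : M ⊗[ℂ] N ≃ₗ[ℂ] (Module.Basis.ofVectorSpaceIndex ℂ M →₀ ℂ) ⊗[ℂ] N :=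
    TensorProduct.congr c.repr (LinearEquiv.refl ℂ N)
  have key : ∀ (i) (z : M ⊗[ℂ] N),
      TensorProduct.finsuppScalarLeft ℂ N _ (e z) i = sliceL (c.coord i) z := by
    intro i z
    induction z using TensorProduct.induction_on with
    | zero => simp
    | tmul a b =>
        simp [e, TensorProduct.finsuppScalarLeft_apply_tmul_apply, Module.Basis.coord_apply]
    | add u v hu hv => simp [map_add, hu, hv]
  have : e y = 0 := by
    apply (TensorProduct.finsuppScalarLeft ℂ N _).injective
    ext i
    simp [key i y, h (c.coord i)]
  simpa using (map_eq_zero_iff e e.injective).mp this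


lemma map_lr {M' N' : Type*} [AddCommGroup M'] [Module ℂ M'] [AddCommGroup N'] [Module ℂ N']
    (g : M →ₗ[ℂ] M') (h : N →ₗ[ℂ] N') (x : M ⊗[ℂ] N) :
    TensorProduct.map g LinearMap.id (TensorProduct.map LinearMap.id h x)
      = TensorProduct.map g h x := by
  induction x using TensorProduct.induction_on with
  | zero => simp
  | tmul a b => simp
  | add u v hu hv => simp [hu, hv]

lemma map_rl {M' N' : Type*} [AddCommGroup M'] [Module ℂ M'] [AddCommGroup N'] [Module ℂ N']
    (g : M →ₗ[ℂ] M') (h : N →ₗ[ℂ] N') (x : M ⊗[ℂ] N) :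
    TensorProduct.map LinearMap.id h (TensorProduct.map g LinearMap.id x)
      = TensorProduct.map g h x := by
  induction x using TensorProduct.induction_on with
  | zero => simp
  | tmul a b => simp
  | add u v hu hv => simp [hu, hv]


lemma map_comm_sq {M' N' : Type*} [AddCommGroup M'] [Module ℂ M'] [AddCommGroup N'] [Module ℂ N']
    (g : M →ₗ[ℂ] M') (h : N →ₗ[ℂ] N') (x : M ⊗[ℂ] N) :
    TensorProduct.map g LinearMap.id (TensorProduct.map LinearMap.id h x)
      = TensorProduct.map LinearMap.id h (TensorProduct.map g LinearMap.id x) := by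
  rw [map_lr, map_rl]

end Slices


end AQGPf

namespace AQGPf

section Rings

variable {R S : Type*} [NonUnitalRing R] [Module ℂ R] [SMulCommClass ℂ R R] [IsScalarTower ℂ R R]
  [NonUnitalRing S] [Module ℂ S] [SMulCommClass ℂ S S] [IsScalarTower ℂ S S]

lemma tmul_mul_tmul (a c : R) (b d : S) :
    (a ⊗ₜ[ℂ] b) * (c ⊗ₜ[ℂ] d) = (a * c) ⊗ₜ (b * d) :=
  Algebra.TensorProduct.tmul_mul_tmul a c b d

lemma mul_right_eq (x : R ⊗[ℂ] S) (a : R) (b : S) :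
    x * (a ⊗ₜ b) = TensorProduct.map (mulRight ℂ a) (mulRight ℂ b) x := by
  induction x using TensorProduct.induction_on with
  | zero => simp
  | tmul c d => simp [tmul_mul_tmul]
  | add u v hu hv => simp only [map_add, mul_add, add_mul, hu, hv]

lemma mul_left_eq (x : R ⊗[ℂ] S) (a : R) (b : S) :
    (a ⊗ₜ b) * x = TensorProduct.map (mulLeft ℂ a) (mulLeft ℂ b) x := by
  induction x using TensorProduct.induction_on with
  | zero => simp
  | tmul c d => simp [tmul_mul_tmul]
  | add u v hu hv => simp only [map_add, mul_add, add_mul, hu, hv]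

/-- `(w·(1⊗c))·z = w·((1⊗c)·z)` -/
lemma X1 (c : S) (w z : R ⊗[ℂ] S) :
    (TensorProduct.map LinearMap.id (mulRight ℂ c) w) * z
      = w * (TensorProduct.map LinearMap.id (mulLeft ℂ c) z) := by
  induction w using TensorProduct.induction_on with
  | zero => simp
  | tmul a b =>
      induction z using TensorProduct.induction_on with
      | zero => simp
      | tmul a' b' => simp [tmul_mul_tmul, mul_assoc]
      | add u v hu hv => simp only [map_add, mul_add, add_mul, hu, hv]
  | add u v hu hv => simp only [map_add, mul_add, add_mul, hu, hv]

/-- `((1⊗b)·w)·z = (1⊗b)·(w·z)` -/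
lemma X2 (b : S) (w z : R ⊗[ℂ] S) :
    (TensorProduct.map LinearMap.id (mulLeft ℂ b) w) * z
      = TensorProduct.map LinearMap.id (mulLeft ℂ b) (w * z) := by
  induction w using TensorProduct.induction_on with
  | zero => simp
  | tmul a b' =>
      induction z using TensorProduct.induction_on with
      | zero => simp
      | tmul a' b'' => simp [tmul_mul_tmul, mul_assoc]
      | add u v hu hv => simp only [map_add, mul_add, add_mul, hu, hv]
  | add u v hu hv => simp only [map_add, mul_add, add_mul, hu, hv]

/-- `z·(w·(1⊗b)) = (z·w)·(1⊗b)` -/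
lemma X4 (b : S) (w z : R ⊗[ℂ] S) :
    z * (TensorProduct.map LinearMap.id (mulRight ℂ b) w)
      = TensorProduct.map LinearMap.id (mulRight ℂ b) (z * w) := by
  induction w using TensorProduct.induction_on with
  | zero => simp
  | tmul a b' =>
      induction z using TensorProduct.induction_on with
      | zero => simp
      | tmul a' b'' => simp [tmul_mul_tmul, mul_assoc]
      | add u v hu hv => simp only [map_add, mul_add, add_mul, hu, hv]
  | add u v hu hv => simp only [map_add, mul_add, add_mul, hu, hv]

/-- `(w·(α⊗1))·z = w·((α⊗1)·z)` -/
lemma X5 (α : R) (w z : R ⊗[ℂ] S) :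
    (TensorProduct.map (mulRight ℂ α) LinearMap.id w) * z
      = w * (TensorProduct.map (mulLeft ℂ α) LinearMap.id z) := by
  induction w using TensorProduct.induction_on with
  | zero => simp
  | tmul a b =>
      induction z using TensorProduct.induction_on with
      | zero => simp
      | tmul a' b' => simp [tmul_mul_tmul, mul_assoc]
      | add u v hu hv => simp only [map_add, mul_add, add_mul, hu, hv]
  | add u v hu hv => simp only [map_add, mul_add, add_mul, hu, hv]

/-- `((a⊗1)·w)·z = (a⊗1)·(w·z)` -/
lemma X6 (a : R) (w z : R ⊗[ℂ] S) :
    (TensorProduct.map (mulLeft ℂ a) LinearMap.id w) * z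
      = TensorProduct.map (mulLeft ℂ a) LinearMap.id (w * z) := by
  induction w using TensorProduct.induction_on with
  | zero => simp
  | tmul a' b =>
      induction z using TensorProduct.induction_on with
      | zero => simp
      | tmul a'' b' => simp [tmul_mul_tmul, mul_assoc]
      | add u v hu hv => simp only [map_add, mul_add, add_mul, hu, hv]
  | add u v hu hv => simp only [map_add, mul_add, add_mul, hu, hv]

/-- `z·(w·(a⊗1)) = (z·w)·(a⊗1)` -/
lemma X8 (a : R) (w z : R ⊗[ℂ] S) :
    z * (TensorProduct.map (mulRight ℂ a) LinearMap.id w)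
      = TensorProduct.map (mulRight ℂ a) LinearMap.id (z * w) := by
  induction w using TensorProduct.induction_on with
  | zero => simp
  | tmul a' b =>
      induction z using TensorProduct.induction_on with
      | zero => simp
      | tmul a'' b' => simp [tmul_mul_tmul, mul_assoc]
      | add u v hu hv => simp only [map_add, mul_add, add_mul, hu, hv]
  | add u v hu hv => simp only [map_add, mul_add, add_mul, hu, hv]

/-- Cancellation by right multiplication with `y ⊗ (z*w)`. -/
lemma cancel_r (h₁ : ∀ a : R, (∀ b, a * b = 0) → a = 0)
    (h₂ : ∀ a : S, (∀ b, a * b = 0) → a = 0)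
    {x : R ⊗[ℂ] S} (h : ∀ (y : R) (z w : S), x * (y ⊗ₜ (z * w)) = 0) : x = 0 := by
  have k1 : ∀ (f : S →ₗ[ℂ] ℂ) (z w : S),
      sliceR (f ∘ₗ mulRight ℂ (z * w)) x = 0 := by
    intro f z w
    apply h₁
    intro Y
    have h0 := congrArg (sliceR f) (h Y z w)
    rw [mul_right_eq] at h0
    rw [← map_lr, sliceR_map_left, sliceR_map_right] at h0
    simpa using h0
  have k2 : ∀ z w : S,
      TensorProduct.map LinearMap.id (mulRight ℂ w)
        (TensorProduct.map LinearMap.id (mulRight ℂ z) x) = 0 := by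
    intro z w
    apply sep_right
    intro f
    have : mulRight ℂ (z * w) = (mulRight ℂ w) ∘ₗ (mulRight ℂ z) := by
      ext r; simp [mul_assoc]
    have h0 := k1 f z w
    rw [this] at h0
    rw [sliceR_map_right, sliceR_map_right]
    rw [← LinearMap.comp_assoc] at h0
    exact h0
  have k3 : ∀ (g : R →ₗ[ℂ] ℂ) (z : S),
      sliceL g (TensorProduct.map LinearMap.id (mulRight ℂ z) x) = 0 := by
    intro g z
    apply h₂
    intro w
    have h0 := congrArg (sliceL g) (k2 z w)
    rw [sliceL_map_right] at h0
    simpa using h0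
  have k4 : ∀ g : R →ₗ[ℂ] ℂ, sliceL g x = 0 := by
    intro g
    apply h₂
    intro z
    have h0 := k3 g z
    rw [sliceL_map_right] at h0
    simpa using h0
  exact sep_left k4

/-- Cancellation by left multiplication with `y ⊗ (z*w)`. -/
lemma cancel_l (h₁ : ∀ a : R, (∀ b, b * a = 0) → a = 0)
    (h₂ : ∀ a : S, (∀ b, b * a = 0) → a = 0)
    {x : R ⊗[ℂ] S} (h : ∀ (y : R) (z w : S), (y ⊗ₜ (z * w)) * x = 0) : x = 0 := by
  have k1 : ∀ (f : S →ₗ[ℂ] ℂ) (z w : S),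
      sliceR (f ∘ₗ mulLeft ℂ (z * w)) x = 0 := by
    intro f z w
    apply h₁
    intro Y
    have h0 := congrArg (sliceR f) (h Y z w)
    rw [mul_left_eq] at h0
    rw [← map_lr, sliceR_map_left, sliceR_map_right] at h0
    simpa using h0
  have k2 : ∀ z w : S,
      TensorProduct.map LinearMap.id (mulLeft ℂ z)
        (TensorProduct.map LinearMap.id (mulLeft ℂ w) x) = 0 := by
    intro z w
    apply sep_right
    intro f
    have : mulLeft ℂ (z * w) = (mulLeft ℂ z) ∘ₗ (mulLeft ℂ w) := by
      ext r; simp [mul_assoc]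
    have h0 := k1 f z w
    rw [this] at h0
    rw [sliceR_map_right, sliceR_map_right]
    rw [← LinearMap.comp_assoc] at h0
    exact h0
  have k3 : ∀ (g : R →ₗ[ℂ] ℂ) (w : S),
      sliceL g (TensorProduct.map LinearMap.id (mulLeft ℂ w) x) = 0 := by
    intro g w
    apply h₂
    intro z
    have h0 := congrArg (sliceL g) (k2 z w)
    rw [sliceL_map_right] at h0
    simpa using h0
  have k4 : ∀ g : R →ₗ[ℂ] ℂ, sliceL g x = 0 := by
    intro g
    apply h₂
    intro z
    have h0 := k3 g z
    rw [sliceL_map_right] at h0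
    simpa using h0
  exact sep_left k4

end Rings

end AQGPf

end

noncomputable section
namespace AQGPf

section HopfA

variable {A : Type*} [NonUnitalRing A] [Module ℂ A]
  [SMulCommClass ℂ A A] [IsScalarTower ℂ A A] (H : AQG A)

include H

/-- `m ∘ (S ⊗ id)` -/
def mSl : A ⊗[ℂ] A →ₗ[ℂ] A :=
  LinearMap.mul' ℂ A ∘ₗ TensorProduct.map H.S.toLinearMap LinearMap.id

/-- `m ∘ (id ⊗ S)` -/
def mSr : A ⊗[ℂ] A →ₗ[ℂ] A :=
  LinearMap.mul' ℂ A ∘ₗ TensorProduct.map LinearMap.id H.S.toLinearMap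

@[simp] lemma mSl_tmul (a b : A) : mSl H (a ⊗ₜ b) = H.S a * b := by
  simp [mSl]

@[simp] lemma mSr_tmul (a b : A) : mSr H (a ⊗ₜ b) = a * H.S b := by
  simp [mSr]

lemma mSl_T2 (a b : A) : mSl H (H.T2 (a ⊗ₜ b)) = H.counit a • b := H.antipode_l a b

lemma mSr_T3 (a b : A) : mSr H (H.T3 (a ⊗ₜ b)) = H.counit a • b := H.antipode_r a b

lemma span_mul (y : A) :
    y ∈ Submodule.span ℂ {z : A | ∃ u' v' : A, z = u' * v'} := by
  obtain ⟨e, he⟩ : ∃ e, H.counit e ≠ 0 := by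
    by_contra hc
    push_neg at hc
    exact H.counit_ne (LinearMap.ext fun a => hc a)
  have hσ : ∀ t : A ⊗[ℂ] A,
      sliceR H.counit (H.T1 t) ∈ Submodule.span ℂ {z : A | ∃ u' v' : A, z = u' * v'} := by
    intro t
    induction t using TensorProduct.induction_on with
    | zero => simp
    | tmul a b =>
        rw [H.counit_T1]
        exact Submodule.subset_span ⟨a, b, rfl⟩
    | add u v hu hv =>
        rw [map_add, map_add]
        exact Submodule.add_mem _ hu hv
  have h1 : sliceR H.counit (H.T1 (H.T1.symm (y ⊗ₜ e))) = H.counit e • y := by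
    rw [LinearEquiv.apply_symm_apply]; simp
  have h2 := hσ (H.T1.symm (y ⊗ₜ e))
  rw [h1] at h2
  have h3 := Submodule.smul_mem _ (H.counit e)⁻¹ h2
  rwa [smul_smul, inv_mul_cancel₀ he, one_smul] at h3

lemma cancelAA_l {x : A ⊗[ℂ] A} (h : ∀ z, z * x = 0) : x = 0 :=
  cancel_l H.nondeg_r H.nondeg_r (fun y z w => h _)

lemma mSl_mul_right (t : A ⊗[ℂ] A) (x y : A) :
    mSl H (t * (x ⊗ₜ y)) = H.S x * mSl H t * y := by
  induction t using TensorProduct.induction_on with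
  | zero => simp
  | tmul a b => simp [tmul_mul_tmul, H.S_mul, mul_assoc]
  | add u v hu hv => simp only [add_mul, map_add, hu, hv, mul_add]

lemma mSr_mul_left (t : A ⊗[ℂ] A) (x y : A) :
    mSr H ((x ⊗ₜ y) * t) = x * mSr H t * H.S y := by
  induction t using TensorProduct.induction_on with
  | zero => simp
  | tmul a b => simp [tmul_mul_tmul, H.S_mul, mul_assoc]
  | add u v hu hv => simp only [mul_add, map_add, hu, hv, add_mul]

lemma mSr_mulLeft (t : A ⊗[ℂ] A) (b : A) :
    b * mSr H t = mSr H (TensorProduct.map (mulLeft ℂ b) LinearMap.id t) := by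
  induction t using TensorProduct.induction_on with
  | zero => simp
  | tmul a c => simp [mul_assoc]
  | add u v hu hv => simp only [map_add, mul_add, hu, hv]

lemma mSr_mulLeft_right (t : A ⊗[ℂ] A) (y : A) :
    mSr H (TensorProduct.map LinearMap.id (mulLeft ℂ y) t) = mSr H t * H.S y := by
  induction t using TensorProduct.induction_on with
  | zero => simp
  | tmul a c => simp [H.S_mul, mul_assoc]
  | add u v hu hv => simp only [map_add, add_mul, hu, hv]

lemma T4_T3_exchange (a y b : A) :
    TensorProduct.map (mulLeft ℂ b) LinearMap.id (H.T4 (a ⊗ₜ y))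
      = TensorProduct.map LinearMap.id (mulLeft ℂ y) (H.T3 (a ⊗ₜ b)) := by
  rw [← sub_eq_zero]
  apply cancelAA_l H
  intro z
  rw [mul_sub, sub_eq_zero]
  rw [← X5, H.ΔR_T4, ← X1, H.ΔR_T3, map_lr, map_rl]

lemma antipode_r4 (a y : A) :
    mSr H (H.T4 (a ⊗ₜ y)) = H.counit a • H.S y := by
  rw [← sub_eq_zero]
  apply H.nondeg_r
  intro b
  rw [mul_sub, sub_eq_zero]
  rw [mSr_mulLeft, T4_T3_exchange, mSr_mulLeft_right, mSr_T3]
  rw [smul_mul_assoc, mul_smul_comm]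

lemma anti_ΔL (p x y : A) :
    mSl H (H.ΔL p (x ⊗ₜ y)) = H.counit p • (H.S x * y) := by
  induction span_mul H y using Submodule.span_induction with
  | mem w hw =>
      obtain ⟨u', v', rfl⟩ := hw
      have h1 : H.ΔL p (x ⊗ₜ (u' * v')) = H.T2 (p ⊗ₜ u') * (x ⊗ₜ v') := by
        rw [H.ΔL_T2]; simp
      rw [h1, mSl_mul_right, mSl_T2, mul_smul_comm, smul_mul_assoc, mul_assoc]
  | zero => simp
  | add w w' _ _ hw hw' =>
      simp only [tmul_add, add_tmul, map_add, hw, hw', mul_add, add_mul, smul_add]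
  | smul c w _ hw =>
      simp only [tmul_smul, ← TensorProduct.smul_tmul', map_smul, hw, mul_smul_comm,
        smul_mul_assoc, smul_comm c]

lemma anti_ΔR (p x y : A) :
    mSr H (H.ΔR p (x ⊗ₜ y)) = H.counit p • (x * H.S y) := by
  induction span_mul H y using Submodule.span_induction with
  | mem w hw =>
      obtain ⟨u', v', rfl⟩ := hw
      have h1 : H.ΔR p (x ⊗ₜ (u' * v')) = (x ⊗ₜ u') * H.T4 (p ⊗ₜ v') := by
        rw [H.ΔR_T4]; simp
      rw [h1, mSr_mul_left, antipode_r4, mul_smul_comm, smul_mul_assoc,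
        mul_assoc, ← H.S_mul]
  | zero => simp
  | add w w' _ _ hw hw' =>
      simp only [tmul_add, add_tmul, map_add, hw, hw', mul_add, add_mul, smul_add]
  | smul c w _ hw =>
      simp only [tmul_smul, ← TensorProduct.smul_tmul', map_smul, hw, mul_smul_comm,
        smul_mul_assoc, smul_comm c]

lemma counit_mul_right (t : A ⊗[ℂ] A) (v y : A) :
    sliceR H.counit (t * (v ⊗ₜ y)) = H.counit y • (sliceR H.counit t * v) := by
  induction t using TensorProduct.induction_on with
  | zero => simp
  | tmul a b =>
      simp only [tmul_mul_tmul, sliceR_tmul, H.counit_mul, smul_mul_assoc, mul_smul]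
      rw [smul_comm]
  | add u w hu hw => simp only [add_mul, map_add, hu, hw, smul_add]

lemma counit_mul_left (t : A ⊗[ℂ] A) (x u : A) :
    sliceL H.counit ((x ⊗ₜ u) * t) = H.counit x • (u * sliceL H.counit t) := by
  induction t using TensorProduct.induction_on with
  | zero => simp
  | tmul a b =>
      simp only [tmul_mul_tmul, sliceL_tmul, H.counit_mul, mul_smul]
      rw [mul_smul_comm]
  | add w w' hw hw' => simp only [mul_add, map_add, hw, hw', smul_add, mul_add]

lemma counit_ΔL_R (p x y : A) :
    sliceR H.counit (H.ΔL p (x ⊗ₜ y)) = H.counit y • (p * x) := by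
  induction span_mul H x using Submodule.span_induction with
  | mem w hw =>
      obtain ⟨u', v', rfl⟩ := hw
      have h1 : H.ΔL p ((u' * v') ⊗ₜ y) = H.T1 (p ⊗ₜ u') * (v' ⊗ₜ y) := by
        rw [H.ΔL_T1]; simp
      rw [h1, counit_mul_right, H.counit_T1, mul_assoc]
  | zero => simp
  | add w w' _ _ hw hw' =>
      simp only [tmul_add, add_tmul, map_add, hw, hw', mul_add, add_mul, smul_add]
  | smul c w _ hw =>
      simp only [tmul_smul, ← TensorProduct.smul_tmul', map_smul, hw, mul_smul_comm,
        smul_mul_assoc, smul_comm c]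

lemma counit_ΔR_L (p x y : A) :
    sliceL H.counit (H.ΔR p (x ⊗ₜ y)) = H.counit x • (y * p) := by
  induction span_mul H y using Submodule.span_induction with
  | mem w hw =>
      obtain ⟨u', v', rfl⟩ := hw
      have h1 : H.ΔR p (x ⊗ₜ (u' * v')) = (x ⊗ₜ u') * H.T4 (p ⊗ₜ v') := by
        rw [H.ΔR_T4]; simp
      rw [h1, counit_mul_left, H.counit_T4, ← mul_assoc]
  | zero => simp
  | add w w' _ _ hw hw' =>
      simp only [tmul_add, add_tmul, map_add, hw, hw', mul_add, add_mul, smul_add]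
  | smul c w _ hw =>
      simp only [tmul_smul, ← TensorProduct.smul_tmul', map_smul, hw, mul_smul_comm,
        smul_mul_assoc, smul_comm c]

lemma spanΔL (w : A ⊗[ℂ] A) :
    w ∈ Submodule.span ℂ {w : A ⊗[ℂ] A | ∃ p x y, w = H.ΔL p (x ⊗ₜ y)} := by
  induction w using TensorProduct.induction_on with
  | zero => exact Submodule.zero_mem _
  | add u v hu hv => exact Submodule.add_mem _ hu hv
  | tmul x y =>
      induction span_mul H x using Submodule.span_induction with
      | zero => rw [zero_tmul]; exact Submodule.zero_mem _
      | add w w' _ _ hw hw' => rw [add_tmul]; exact Submodule.add_mem _ hw hw'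
      | smul c w _ hw => rw [← TensorProduct.smul_tmul']; exact Submodule.smul_mem _ _ hw
      | mem w hw =>
          obtain ⟨u', v', rfl⟩ := hw
          induction span_mul H y using Submodule.span_induction with
          | zero => rw [tmul_zero]; exact Submodule.zero_mem _
          | add z z' _ _ hz hz' => rw [tmul_add]; exact Submodule.add_mem _ hz hz'
          | smul c z _ hz => rw [tmul_smul]; exact Submodule.smul_mem _ _ hz
          | mem z hz =>
              obtain ⟨e, f, rfl⟩ := hz
              rw [show (u'*v') ⊗ₜ[ℂ] (e*f) = (u' ⊗ₜ[ℂ] e) * (v' ⊗ₜ[ℂ] f) from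
                    (tmul_mul_tmul u' v' e f).symm,
                ← (H.T2).apply_symm_apply (u' ⊗ₜ e)]
              generalize (H.T2.symm (u' ⊗ₜ e)) = t
              induction t using TensorProduct.induction_on with
              | zero => rw [map_zero, zero_mul]; exact Submodule.zero_mem _
              | add s s' hs hs' =>
                  rw [map_add, add_mul]; exact Submodule.add_mem _ hs hs'
              | tmul p b =>
                  refine Submodule.subset_span ⟨p, v', b*f, ?_⟩
                  rw [H.ΔL_T2]; simp

lemma spanΔR (w : A ⊗[ℂ] A) :
    w ∈ Submodule.span ℂ {w : A ⊗[ℂ] A | ∃ p x y, w = H.ΔR p (x ⊗ₜ y)} := by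
  induction w using TensorProduct.induction_on with
  | zero => exact Submodule.zero_mem _
  | add u v hu hv => exact Submodule.add_mem _ hu hv
  | tmul x y =>
      induction span_mul H x using Submodule.span_induction with
      | zero => rw [zero_tmul]; exact Submodule.zero_mem _
      | add w w' _ _ hw hw' => rw [add_tmul]; exact Submodule.add_mem _ hw hw'
      | smul c w _ hw => rw [← TensorProduct.smul_tmul']; exact Submodule.smul_mem _ _ hw
      | mem w hw =>
          obtain ⟨u', v', rfl⟩ := hw
          induction span_mul H y using Submodule.span_induction with
          | zero => rw [tmul_zero]; exact Submodule.zero_mem _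
          | add z z' _ _ hz hz' => rw [tmul_add]; exact Submodule.add_mem _ hz hz'
          | smul c z _ hz => rw [tmul_smul]; exact Submodule.smul_mem _ _ hz
          | mem z hz =>
              obtain ⟨e, f, rfl⟩ := hz
              rw [show (u'*v') ⊗ₜ[ℂ] (e*f) = (u' ⊗ₜ[ℂ] e) * (v' ⊗ₜ[ℂ] f) from
                    (tmul_mul_tmul u' v' e f).symm,
                ← (H.T4).apply_symm_apply (v' ⊗ₜ f)]
              generalize (H.T4.symm (v' ⊗ₜ f)) = t
              induction t using TensorProduct.induction_on with
              | zero => rw [map_zero, mul_zero]; exact Submodule.zero_mem _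
              | add s s' hs hs' =>
                  rw [map_add, mul_add]; exact Submodule.add_mem _ hs hs'
              | tmul p b =>
                  refine Submodule.subset_span ⟨p, u', e*b, ?_⟩
                  rw [H.ΔR_T4]; simp

end HopfA

end AQGPf

end


noncomputable section
namespace AQGPf

section Corep

variable {A : Type*} [NonUnitalRing A] [Module ℂ A]
  [SMulCommClass ℂ A A] [IsScalarTower ℂ A A] (H : AQG A)
variable {B : Type*} [NonUnitalRing B] [Module ℂ B]
  [SMulCommClass ℂ B B] [IsScalarTower ℂ B B]

/-- `m(S ⊗ ι) ⊗ ι` -/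
def PhiS : (A ⊗[ℂ] A) ⊗[ℂ] B →ₗ[ℂ] A ⊗[ℂ] B := LinearMap.rTensor B (mSl H)
/-- `m(ι ⊗ S) ⊗ ι` -/
def PhiSr : (A ⊗[ℂ] A) ⊗[ℂ] B →ₗ[ℂ] A ⊗[ℂ] B := LinearMap.rTensor B (mSr H)
/-- `(ε ⊗ ι) ⊗ ι` -/
def PhiE0 : (A ⊗[ℂ] A) ⊗[ℂ] B →ₗ[ℂ] A ⊗[ℂ] B := LinearMap.rTensor B (sliceL H.counit)
/-- `(ι ⊗ ε) ⊗ ι` -/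
def PhiE5 : (A ⊗[ℂ] A) ⊗[ℂ] B →ₗ[ℂ] A ⊗[ℂ] B := LinearMap.rTensor B (sliceR H.counit)

@[simp] lemma PhiS_tmul (u : A ⊗[ℂ] A) (c : B) : PhiS H (u ⊗ₜ c) = mSl H u ⊗ₜ c := rfl
@[simp] lemma PhiSr_tmul (u : A ⊗[ℂ] A) (c : B) : PhiSr H (u ⊗ₜ c) = mSr H u ⊗ₜ c := rfl
@[simp] lemma PhiE0_tmul (u : A ⊗[ℂ] A) (c : B) :
    PhiE0 H (u ⊗ₜ c) = sliceL H.counit u ⊗ₜ c := rfl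
@[simp] lemma PhiE5_tmul (u : A ⊗[ℂ] A) (c : B) :
    PhiE5 H (u ⊗ₜ c) = sliceR H.counit u ⊗ₜ c := rfl

lemma piDL_apply (p : A) (q : B) (x y : A) (c : B) :
    H.piDL (p ⊗ₜ q) ((x ⊗ₜ y) ⊗ₜ c) = (H.ΔL p (x ⊗ₜ y)) ⊗ₜ (q * c) := by
  simp [AQG.piDL, LinearMap.mul_apply']

lemma piDR_apply (p : A) (q : B) (x y : A) (c : B) :
    H.piDR (p ⊗ₜ q) ((x ⊗ₜ y) ⊗ₜ c) = (H.ΔR p (x ⊗ₜ y)) ⊗ₜ (c * q) := by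
  simp [AQG.piDR, LinearMap.mul_apply']

lemma swap12_apply (x y : A) (c : B) :
    AQG.swap12 ((x ⊗ₜ y) ⊗ₜ c) = (y ⊗ₜ x) ⊗ₜ c := by
  simp [AQG.swap12]

lemma leg23_apply (f : A ⊗[ℂ] B →ₗ[ℂ] A ⊗[ℂ] B) (x y : A) (c : B) :
    AQG.leg23 f ((x ⊗ₜ y) ⊗ₜ c)
      = (TensorProduct.assoc ℂ A A B).symm (x ⊗ₜ f (y ⊗ₜ c)) := by
  simp [AQG.leg23]

lemma leg13_def (f : A ⊗[ℂ] B →ₗ[ℂ] A ⊗[ℂ] B) (Z : (A ⊗[ℂ] A) ⊗[ℂ] B) :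
    AQG.leg13 f Z = AQG.swap12 (AQG.leg23 f (AQG.swap12 Z)) := rfl

lemma leg13_apply (f : A ⊗[ℂ] B →ₗ[ℂ] A ⊗[ℂ] B) (x y : A) (c : B) :
    AQG.leg13 f ((x ⊗ₜ y) ⊗ₜ c)
      = AQG.swap12 (AQG.leg23 f ((y ⊗ₜ x) ⊗ₜ c)) := by
  rw [leg13_def, swap12_apply]

lemma LA1 (y : A) (ζ : A ⊗[ℂ] B) :
    PhiE5 H (AQG.swap12 ((TensorProduct.assoc ℂ A A B).symm (y ⊗ₜ ζ)))
      = H.counit y • ζ := by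
  induction ζ using TensorProduct.induction_on with
  | zero => rw [tmul_zero, LinearEquiv.map_zero, LinearEquiv.map_zero, map_zero, smul_zero]
  | tmul x' c' =>
      rw [TensorProduct.assoc_symm_tmul, swap12_apply, PhiE5_tmul, sliceR_tmul,
        TensorProduct.smul_tmul']
  | add u v hu hv =>
      rw [tmul_add, LinearEquiv.map_add, LinearEquiv.map_add, map_add, hu, hv, smul_add]

lemma LA2 (x : A) (ζ : A ⊗[ℂ] B) :
    PhiE5 H ((TensorProduct.assoc ℂ A A B).symm (x ⊗ₜ ζ))
      = x ⊗ₜ sliceL H.counit ζ := by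
  induction ζ using TensorProduct.induction_on with
  | zero => rw [tmul_zero, LinearEquiv.map_zero, map_zero, map_zero, tmul_zero]
  | tmul y' c' =>
      rw [TensorProduct.assoc_symm_tmul, PhiE5_tmul, sliceR_tmul, sliceL_tmul, tmul_smul]
      exact (TensorProduct.smul_tmul' _ _ _).symm
  | add u v hu hv =>
      rw [tmul_add, LinearEquiv.map_add, map_add, hu, hv, map_add, tmul_add]

lemma LA3 (x : A) (ζ : A ⊗[ℂ] B) :
    PhiE0 H ((TensorProduct.assoc ℂ A A B).symm (x ⊗ₜ ζ)) = H.counit x • ζ := by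
  induction ζ using TensorProduct.induction_on with
  | zero => rw [tmul_zero, LinearEquiv.map_zero, map_zero, smul_zero]
  | tmul y' c' =>
      rw [TensorProduct.assoc_symm_tmul, PhiE0_tmul, sliceL_tmul,
        TensorProduct.smul_tmul']
  | add u v hu hv =>
      rw [tmul_add, LinearEquiv.map_add, map_add, hu, hv, smul_add]

lemma LA4 (y : A) (ζ : A ⊗[ℂ] B) :
    PhiE0 H (AQG.swap12 ((TensorProduct.assoc ℂ A A B).symm (y ⊗ₜ ζ)))
      = y ⊗ₜ sliceL H.counit ζ := by
  induction ζ using TensorProduct.induction_on with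
  | zero => rw [tmul_zero, LinearEquiv.map_zero, LinearEquiv.map_zero, map_zero,
      map_zero, tmul_zero]
  | tmul x' c' =>
      rw [TensorProduct.assoc_symm_tmul, swap12_apply, PhiE0_tmul, sliceL_tmul,
        sliceL_tmul, tmul_smul]
      exact (TensorProduct.smul_tmul' _ _ _).symm
  | add u v hu hv =>
      rw [tmul_add, LinearEquiv.map_add, LinearEquiv.map_add, map_add, hu, hv,
        map_add, tmul_add]

lemma LA5 (Y' : A) (ζ : A ⊗[ℂ] B) :
    PhiS H (AQG.swap12 ((TensorProduct.assoc ℂ A A B).symm (Y' ⊗ₜ ζ)))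
      = TensorProduct.map (mulRight ℂ Y') LinearMap.id
          (TensorProduct.map H.S.toLinearMap LinearMap.id ζ) := by
  induction ζ using TensorProduct.induction_on with
  | zero => rw [tmul_zero, LinearEquiv.map_zero, LinearEquiv.map_zero, map_zero,
      map_zero, map_zero]
  | tmul x' c' =>
      rw [TensorProduct.assoc_symm_tmul, swap12_apply, PhiS_tmul, mSl_tmul]
      simp
  | add u v hu hv =>
      rw [tmul_add, LinearEquiv.map_add, LinearEquiv.map_add, map_add, hu, hv,
        map_add, map_add]

lemma LA6 (X' : A) (ζ : A ⊗[ℂ] B) :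
    PhiSr H ((TensorProduct.assoc ℂ A A B).symm (X' ⊗ₜ ζ))
      = TensorProduct.map (mulLeft ℂ X') LinearMap.id
          (TensorProduct.map H.S.toLinearMap LinearMap.id ζ) := by
  induction ζ using TensorProduct.induction_on with
  | zero => rw [tmul_zero, LinearEquiv.map_zero, map_zero, map_zero, map_zero]
  | tmul a' c' =>
      rw [TensorProduct.assoc_symm_tmul, PhiSr_tmul, mSr_tmul]
      simp
  | add u v hu hv =>
      rw [tmul_add, LinearEquiv.map_add, map_add, hu, hv, map_add, map_add]

lemma CL1 (f : A ⊗[ℂ] B →ₗ[ℂ] A ⊗[ℂ] B) (Z : (A ⊗[ℂ] A) ⊗[ℂ] B) :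
    PhiE5 H (AQG.leg13 f Z) = f (PhiE5 H Z) := by
  induction Z using TensorProduct.induction_on with
  | zero => simp
  | add u v hu hv => rw [map_add, map_add, hu, hv, map_add, map_add]
  | tmul u c =>
      induction u using TensorProduct.induction_on with
      | zero => simp
      | add u' v' hu' hv' =>
          rw [add_tmul, map_add, map_add, hu', hv', map_add, map_add]
      | tmul x y =>
          rw [leg13_apply, leg23_apply, LA1, PhiE5_tmul, sliceR_tmul,
            ← TensorProduct.smul_tmul', map_smul]

lemma CL2 (f : A ⊗[ℂ] B →ₗ[ℂ] A ⊗[ℂ] B) (Z : (A ⊗[ℂ] A) ⊗[ℂ] B) :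
    PhiE0 H (AQG.leg23 f Z) = f (PhiE0 H Z) := by
  induction Z using TensorProduct.induction_on with
  | zero => simp
  | add u v hu hv => rw [map_add, map_add, hu, hv, map_add, map_add]
  | tmul u c =>
      induction u using TensorProduct.induction_on with
      | zero => simp
      | add u' v' hu' hv' =>
          rw [add_tmul, map_add, map_add, hu', hv', map_add, map_add]
      | tmul x y =>
          rw [leg23_apply, LA3, PhiE0_tmul, sliceL_tmul,
            ← TensorProduct.smul_tmul', map_smul]

variable (V W : Mult (A ⊗[ℂ] B))

lemma kappaE5_apply (x' y' : A) (c' : B) :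
    PhiE5 H (AQG.leg23 V.L ((x' ⊗ₜ y') ⊗ₜ c'))
      = x' ⊗ₜ sliceL H.counit (V.L (y' ⊗ₜ c')) := by
  rw [leg23_apply, LA2]

lemma kappaE0_apply (x' y' : A) (c' : B) :
    PhiE0 H (AQG.leg13 V.R ((x' ⊗ₜ y') ⊗ₜ c'))
      = y' ⊗ₜ sliceL H.counit (V.R (x' ⊗ₜ c')) := by
  rw [leg13_apply, leg23_apply, LA4]

include H in
lemma eqAB_r (hBl : ∀ b : B, (∀ b' : B, b * b' = 0) → b = 0) {x x' : A ⊗[ℂ] B}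
    (h : ∀ (y : A) (z w : B), x * (y ⊗ₜ (z*w)) = x' * (y ⊗ₜ (z*w))) : x = x' := by
  rw [← sub_eq_zero]
  apply cancel_r H.nondeg_l hBl
  intro y z w
  rw [sub_mul, h, sub_self]

include H in
lemma eqAB_l (hBr : ∀ b : B, (∀ b' : B, b' * b = 0) → b = 0) {x x' : A ⊗[ℂ] B}
    (h : ∀ (y : A) (z w : B), (y ⊗ₜ (z*w)) * x = (y ⊗ₜ (z*w)) * x') : x = x' := by
  rw [← sub_eq_zero]
  apply cancel_l H.nondeg_r hBr
  intro y z w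
  rw [mul_sub, h, sub_self]

include H in
lemma commcR (hBl : ∀ b : B, (∀ b' : B, b * b' = 0) → b = 0) (c : B) (ζ : A ⊗[ℂ] B) :
    TensorProduct.map LinearMap.id (mulRight ℂ c) (V.L ζ)
      = V.L (TensorProduct.map LinearMap.id (mulRight ℂ c) ζ) := by
  apply eqAB_r H hBl
  intro y z w
  calc TensorProduct.map LinearMap.id (mulRight ℂ c) (V.L ζ) * (y ⊗ₜ (z*w))
      = V.L ζ * (TensorProduct.map LinearMap.id (mulLeft ℂ c) (y ⊗ₜ (z*w))) := X1 ..
    _ = V.L (ζ * TensorProduct.map LinearMap.id (mulLeft ℂ c) (y ⊗ₜ (z*w))) :=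
        (V.Lmul ..).symm
    _ = V.L ((TensorProduct.map LinearMap.id (mulRight ℂ c) ζ) * (y ⊗ₜ (z*w))) := by
        rw [X1]
    _ = V.L (TensorProduct.map LinearMap.id (mulRight ℂ c) ζ) * (y ⊗ₜ (z*w)) :=
        V.Lmul ..

include H in
lemma commcL (hBr : ∀ b : B, (∀ b' : B, b' * b = 0) → b = 0) (c : B) (ζ : A ⊗[ℂ] B) :
    TensorProduct.map LinearMap.id (mulLeft ℂ c) (V.R ζ)
      = V.R (TensorProduct.map LinearMap.id (mulLeft ℂ c) ζ) := by
  apply eqAB_l H hBr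
  intro y z w
  calc (y ⊗ₜ (z*w)) * (TensorProduct.map LinearMap.id (mulLeft ℂ c) (V.R ζ))
      = (TensorProduct.map LinearMap.id (mulRight ℂ c) (y ⊗ₜ (z*w))) * V.R ζ :=
        (X1 ..).symm
    _ = V.R ((TensorProduct.map LinearMap.id (mulRight ℂ c) (y ⊗ₜ (z*w))) * ζ) :=
        (V.Rmul ..).symm
    _ = V.R ((y ⊗ₜ (z*w)) * TensorProduct.map LinearMap.id (mulLeft ℂ c) ζ) := by
        rw [X1]
    _ = (y ⊗ₜ (z*w)) * V.R (TensorProduct.map LinearMap.id (mulLeft ℂ c) ζ) :=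
        V.Rmul ..

lemma P5 (ζ : A ⊗[ℂ] B) (x y : A) (c : B) :
    PhiE5 H (H.piDL ζ ((x ⊗ₜ y) ⊗ₜ c)) = H.counit y • (ζ * (x ⊗ₜ c)) := by
  induction ζ using TensorProduct.induction_on with
  | zero => rw [map_zero, LinearMap.zero_apply, map_zero, zero_mul, smul_zero]
  | tmul p q =>
      rw [piDL_apply, PhiE5_tmul, counit_ΔL_R, tmul_mul_tmul,
        TensorProduct.smul_tmul']
  | add u v hu hv =>
      rw [map_add, LinearMap.add_apply, map_add, hu, hv, add_mul, smul_add]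

lemma main5 (hV : H.IsCorep V) (hW : V.Inverts W) (z : A ⊗[ℂ] B) (x y : A) (c : B) :
    H.counit y • (z * (x ⊗ₜ c)) = PhiE5 H (AQG.leg23 V.L (H.piDL z ((x ⊗ₜ y) ⊗ₜ c))) := by
  have h1 : V.L (H.counit y • (z * (x ⊗ₜ c)))
      = V.L (PhiE5 H (AQG.leg23 V.L (H.piDL z ((x ⊗ₜ y) ⊗ₜ c)))) := by
    rw [map_smul, V.Lmul, ← P5 H (V.L z) x y c, hV.1, CL1]
  have h2 := congrArg W.L h1
  rw [hW.2.1, hW.2.1] at h2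
  exact h2

lemma genE5 (hV : H.IsCorep V) (hW : V.Inverts W) (u : A ⊗[ℂ] A) (q c : B) :
    PhiE5 H (AQG.leg23 V.L (u ⊗ₜ (q*c))) = PhiE5 H (u ⊗ₜ (q*c)) := by
  induction spanΔL H u using Submodule.span_induction with
  | mem w hw =>
      obtain ⟨p, x, y, rfl⟩ := hw
      rw [← piDL_apply, ← main5 H V W hV hW, P5]
  | zero => simp only [zero_tmul, map_zero]
  | add w w' _ _ hw hw' =>
      simp only [add_tmul, map_add, hw, hw']
  | smul r w _ hw =>
      simp only [← TensorProduct.smul_tmul', map_smul, hw]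

lemma counit_VL (hBl : ∀ b : B, (∀ b' : B, b * b' = 0) → b = 0)
    (hV : H.IsCorep V) (hW : V.Inverts W) (p : A) (q c : B) :
    sliceL H.counit (V.L (p ⊗ₜ (q*c))) = H.counit p • (q*c) := by
  obtain ⟨e, he⟩ : ∃ e, H.counit e ≠ 0 := by
    by_contra hc
    push_neg at hc
    exact H.counit_ne (LinearMap.ext fun a => hc a)
  have he0 : e ≠ 0 := fun h => he (by rw [h, map_zero])
  have h := genE5 H V W hV hW (e ⊗ₜ p) q c
  rw [kappaE5_apply, PhiE5_tmul, sliceR_tmul, TensorProduct.smul_tmul] at h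
  exact tmul_left_cancel he0 h

lemma P5R (ζ : A ⊗[ℂ] B) (x y : A) (c : B) :
    PhiE0 H (H.piDR ζ ((x ⊗ₜ y) ⊗ₜ c)) = H.counit x • ((y ⊗ₜ c) * ζ) := by
  induction ζ using TensorProduct.induction_on with
  | zero => rw [map_zero, LinearMap.zero_apply, map_zero, mul_zero, smul_zero]
  | tmul p q =>
      rw [piDR_apply, PhiE0_tmul, counit_ΔR_L, tmul_mul_tmul,
        TensorProduct.smul_tmul']
  | add u v hu hv =>
      rw [map_add, LinearMap.add_apply, map_add, hu, hv, mul_add, smul_add]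

lemma main5R (hV : H.IsCorep V) (hW : V.Inverts W) (z : A ⊗[ℂ] B) (x y : A) (c : B) :
    H.counit x • ((y ⊗ₜ c) * z) = PhiE0 H (AQG.leg13 V.R (H.piDR z ((x ⊗ₜ y) ⊗ₜ c))) := by
  have h1 : V.R (H.counit x • ((y ⊗ₜ c) * z))
      = V.R (PhiE0 H (AQG.leg13 V.R (H.piDR z ((x ⊗ₜ y) ⊗ₜ c)))) := by
    rw [map_smul, V.Rmul, ← P5R H (V.R z) x y c, hV.2, CL2]
  have h2 := congrArg W.R h1
  rw [hW.2.2.2, hW.2.2.2] at h2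
  exact h2

lemma genE0 (hV : H.IsCorep V) (hW : V.Inverts W) (u : A ⊗[ℂ] A) (c q : B) :
    PhiE0 H (AQG.leg13 V.R (u ⊗ₜ (c*q))) = PhiE0 H (u ⊗ₜ (c*q)) := by
  induction spanΔR H u using Submodule.span_induction with
  | mem w hw =>
      obtain ⟨p, x, y, rfl⟩ := hw
      rw [← piDR_apply, ← main5R H V W hV hW, P5R]
  | zero => simp only [zero_tmul, map_zero]
  | add w w' _ _ hw hw' =>
      simp only [add_tmul, map_add, hw, hw']
  | smul r w _ hw =>
      simp only [← TensorProduct.smul_tmul', map_smul, hw]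

lemma counit_VR (hBr : ∀ b : B, (∀ b' : B, b' * b = 0) → b = 0)
    (hV : H.IsCorep V) (hW : V.Inverts W) (p : A) (c q : B) :
    sliceL H.counit (V.R (p ⊗ₜ (c*q))) = H.counit p • (c*q) := by
  obtain ⟨e, he⟩ : ∃ e, H.counit e ≠ 0 := by
    by_contra hc
    push_neg at hc
    exact H.counit_ne (LinearMap.ext fun a => hc a)
  have he0 : e ≠ 0 := fun h => he (by rw [h, map_zero])
  have h := genE0 H V W hV hW (p ⊗ₜ e) c q
  rw [kappaE0_apply, PhiE0_tmul, sliceL_tmul, TensorProduct.smul_tmul] at h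
  exact tmul_left_cancel he0 h

lemma P1 (ζ : A ⊗[ℂ] B) (x y : A) (c : B) :
    PhiS H (H.piDL ζ ((x ⊗ₜ y) ⊗ₜ c))
      = (H.S x * y) ⊗ₜ (sliceL H.counit ζ * c) := by
  induction ζ using TensorProduct.induction_on with
  | zero =>
      rw [map_zero, LinearMap.zero_apply, map_zero, map_zero, zero_mul, tmul_zero]
  | tmul p q =>
      rw [piDL_apply, PhiS_tmul, anti_ΔL, sliceL_tmul, smul_mul_assoc, tmul_smul,
        TensorProduct.smul_tmul']
  | add u v hu hv =>
      rw [map_add, LinearMap.add_apply, map_add, hu, hv, map_add, add_mul, tmul_add]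

lemma E1gen (hBl : ∀ b : B, (∀ b' : B, b * b' = 0) → b = 0)
    (hV : H.IsCorep V) (hW : V.Inverts W) (u : A ⊗[ℂ] A) (q c : B) :
    PhiS H (AQG.leg13 V.L (AQG.leg23 V.L (u ⊗ₜ (q*c)))) = PhiS H (u ⊗ₜ (q*c)) := by
  induction spanΔL H u using Submodule.span_induction with
  | mem w hw =>
      obtain ⟨p, x, y, rfl⟩ := hw
      have hc : sliceL H.counit (V.L (p ⊗ₜ q)) * c = H.counit p • (q*c) := by
        have h1 : sliceL H.counit (V.L (p ⊗ₜ q)) * c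
            = mulRight ℂ c (sliceL H.counit (V.L (p ⊗ₜ q))) := rfl
        rw [h1, ← sliceL_map_right, commcR H V hBl]
        have h2 : TensorProduct.map LinearMap.id (mulRight ℂ c) (p ⊗ₜ q)
            = p ⊗ₜ (q * c) := by simp
        rw [h2, counit_VL H V W hBl hV hW]
      rw [← piDL_apply, ← hV.1, P1, P1, hc, sliceL_tmul, smul_mul_assoc]
  | zero => simp only [zero_tmul, map_zero]
  | add w w' _ _ hw hw' =>
      simp only [add_tmul, map_add, hw, hw']
  | smul r w _ hw =>
      simp only [← TensorProduct.smul_tmul', map_smul, hw]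

lemma E1 (hBl : ∀ b : B, (∀ b' : B, b * b' = 0) → b = 0)
    (hV : H.IsCorep V) (hW : V.Inverts W) (X Y : A) (q c : B) :
    PhiS H (AQG.leg13 V.L (AQG.leg23 V.L ((X ⊗ₜ Y) ⊗ₜ (q*c))))
      = (H.S X * Y) ⊗ₜ (q*c) := by
  rw [E1gen H V W hBl hV hW, PhiS_tmul, mSl_tmul]

lemma P1R (ζ : A ⊗[ℂ] B) (x y : A) (c : B) :
    PhiSr H (H.piDR ζ ((x ⊗ₜ y) ⊗ₜ c))
      = (x * H.S y) ⊗ₜ (c * sliceL H.counit ζ) := by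
  induction ζ using TensorProduct.induction_on with
  | zero =>
      rw [map_zero, LinearMap.zero_apply, map_zero, map_zero, mul_zero, tmul_zero]
  | tmul p q =>
      rw [piDR_apply, PhiSr_tmul, anti_ΔR, sliceL_tmul, mul_smul_comm, tmul_smul,
        TensorProduct.smul_tmul']
  | add u v hu hv =>
      rw [map_add, LinearMap.add_apply, map_add, hu, hv, map_add, mul_add, tmul_add]

lemma E2gen (hBr : ∀ b : B, (∀ b' : B, b' * b = 0) → b = 0)
    (hV : H.IsCorep V) (hW : V.Inverts W) (u : A ⊗[ℂ] A) (c q : B) :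
    PhiSr H (AQG.leg23 V.R (AQG.leg13 V.R (u ⊗ₜ (c*q)))) = PhiSr H (u ⊗ₜ (c*q)) := by
  induction spanΔR H u using Submodule.span_induction with
  | mem w hw =>
      obtain ⟨p, x, y, rfl⟩ := hw
      have hc : c * sliceL H.counit (V.R (p ⊗ₜ q)) = H.counit p • (c*q) := by
        have h1 : c * sliceL H.counit (V.R (p ⊗ₜ q))
            = mulLeft ℂ c (sliceL H.counit (V.R (p ⊗ₜ q))) := rfl
        rw [h1, ← sliceL_map_right, commcL H V hBr]
        have h2 : TensorProduct.map LinearMap.id (mulLeft ℂ c) (p ⊗ₜ q)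
            = p ⊗ₜ (c * q) := by simp
        rw [h2, counit_VR H V W hBr hV hW]
      rw [← piDR_apply, ← hV.2, P1R, P1R, hc, sliceL_tmul, mul_smul_comm]
  | zero => simp only [zero_tmul, map_zero]
  | add w w' _ _ hw hw' =>
      simp only [add_tmul, map_add, hw, hw']
  | smul r w _ hw =>
      simp only [← TensorProduct.smul_tmul', map_smul, hw]

lemma E2 (hBr : ∀ b : B, (∀ b' : B, b' * b = 0) → b = 0)
    (hV : H.IsCorep V) (hW : V.Inverts W) (X Y : A) (c q : B) :
    PhiSr H (AQG.leg23 V.R (AQG.leg13 V.R ((X ⊗ₜ Y) ⊗ₜ (c*q))))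
      = (X * H.S Y) ⊗ₜ (c*q) := by
  rw [E2gen H V W hBr hV hW, PhiSr_tmul, mSr_tmul]

section uv

variable (v : A → B → A ⊗[ℂ] B)
  (hv : ∀ (a : A) (b : B) (z : A ⊗[ℂ] B),
    v a b * z =
      TensorProduct.map LinearMap.id (LinearMap.mulLeft ℂ b)
        (V.L (TensorProduct.map (LinearMap.mulLeft ℂ (H.S.symm a)) LinearMap.id z)) ∧
    z * v a b =
      TensorProduct.map (LinearMap.mulRight ℂ (H.S.symm a)) LinearMap.id
        (V.R (TensorProduct.map LinearMap.id (LinearMap.mulRight ℂ b) z)))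

include hv in
lemma claimv' (hBl : ∀ b : B, (∀ b' : B, b * b' = 0) → b = 0) (a : A) (b C' : B) :
    TensorProduct.map LinearMap.id (mulRight ℂ C') (v a b)
      = TensorProduct.map LinearMap.id (mulLeft ℂ b) (V.L ((H.S.symm a) ⊗ₜ C')) := by
  apply eqAB_r H hBl
  intro y z w
  calc TensorProduct.map LinearMap.id (mulRight ℂ C') (v a b) * (y ⊗ₜ (z*w))
      = v a b * (TensorProduct.map LinearMap.id (mulLeft ℂ C') (y ⊗ₜ (z*w))) := X1 ..
    _ = TensorProduct.map LinearMap.id (mulLeft ℂ b)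
          (V.L (TensorProduct.map (mulLeft ℂ (H.S.symm a)) LinearMap.id
            (TensorProduct.map LinearMap.id (mulLeft ℂ C') (y ⊗ₜ (z*w))))) :=
        (hv a b _).1
    _ = TensorProduct.map LinearMap.id (mulLeft ℂ b)
          (V.L (TensorProduct.map (mulLeft ℂ (H.S.symm a)) (mulLeft ℂ C')
            (y ⊗ₜ (z*w)))) := by rw [map_lr]
    _ = TensorProduct.map LinearMap.id (mulLeft ℂ b)
          (V.L (((H.S.symm a) ⊗ₜ C') * (y ⊗ₜ (z*w)))) := by rw [mul_left_eq]
    _ = TensorProduct.map LinearMap.id (mulLeft ℂ b)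
          (V.L ((H.S.symm a) ⊗ₜ C') * (y ⊗ₜ (z*w))) := by rw [V.Lmul]
    _ = TensorProduct.map LinearMap.id (mulLeft ℂ b) (V.L ((H.S.symm a) ⊗ₜ C'))
          * (y ⊗ₜ (z*w)) := (X2 ..).symm

include hv in
lemma claimv (hBl : ∀ b : B, (∀ b' : B, b * b' = 0) → b = 0) (a : A) (b : B)
    (ζ' : A ⊗[ℂ] B) :
    TensorProduct.map H.S.toLinearMap LinearMap.id (v a b) * ζ'
      = TensorProduct.map LinearMap.id (mulLeft ℂ b)
          (PhiS H (AQG.leg13 V.L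
            ((TensorProduct.assoc ℂ A A B).symm ((H.S.symm a) ⊗ₜ ζ')))) := by
  induction ζ' using TensorProduct.induction_on with
  | zero =>
      rw [mul_zero, tmul_zero, LinearEquiv.map_zero, map_zero, map_zero, map_zero]
  | tmul Y' C' =>
      rw [TensorProduct.assoc_symm_tmul, leg13_apply, leg23_apply, LA5]
      rw [mul_right_eq, ← map_lr, ← map_comm_sq, claimv' H V v hv hBl a b C',
        map_comm_sq, map_comm_sq]
  | add u' v' hu' hv' =>
      rw [mul_add, tmul_add, LinearEquiv.map_add, map_add, map_add, map_add,
        hu', hv']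

end uv

section uu

variable (u : A → B → A ⊗[ℂ] B)
  (hu : ∀ (a : A) (b : B) (z : A ⊗[ℂ] B),
    u a b * z =
      TensorProduct.map (LinearMap.mulLeft ℂ (H.S.symm a)) LinearMap.id
        (V.L (TensorProduct.map LinearMap.id (LinearMap.mulLeft ℂ b) z)) ∧
    z * u a b =
      TensorProduct.map LinearMap.id (LinearMap.mulRight ℂ b)
        (V.R (TensorProduct.map (LinearMap.mulRight ℂ (H.S.symm a)) LinearMap.id z)))

include hu in
lemma claimu' (hBr : ∀ b : B, (∀ b' : B, b' * b = 0) → b = 0) (a : A) (b C' : B) :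
    TensorProduct.map LinearMap.id (mulLeft ℂ C') (u a b)
      = TensorProduct.map LinearMap.id (mulRight ℂ b) (V.R ((H.S.symm a) ⊗ₜ C')) := by
  apply eqAB_l H hBr
  intro y z w
  calc (y ⊗ₜ (z*w)) * TensorProduct.map LinearMap.id (mulLeft ℂ C') (u a b)
      = TensorProduct.map LinearMap.id (mulRight ℂ C') (y ⊗ₜ (z*w)) * u a b :=
        (X1 ..).symm
    _ = TensorProduct.map LinearMap.id (mulRight ℂ b)
          (V.R (TensorProduct.map (mulRight ℂ (H.S.symm a)) LinearMap.id
            (TensorProduct.map LinearMap.id (mulRight ℂ C') (y ⊗ₜ (z*w))))) :=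
        (hu a b _).2
    _ = TensorProduct.map LinearMap.id (mulRight ℂ b)
          (V.R (TensorProduct.map (mulRight ℂ (H.S.symm a)) (mulRight ℂ C')
            (y ⊗ₜ (z*w)))) := by rw [map_lr]
    _ = TensorProduct.map LinearMap.id (mulRight ℂ b)
          (V.R ((y ⊗ₜ (z*w)) * ((H.S.symm a) ⊗ₜ C'))) := by rw [mul_right_eq]
    _ = TensorProduct.map LinearMap.id (mulRight ℂ b)
          ((y ⊗ₜ (z*w)) * V.R ((H.S.symm a) ⊗ₜ C')) := by rw [V.Rmul]
    _ = (y ⊗ₜ (z*w)) *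
          TensorProduct.map LinearMap.id (mulRight ℂ b) (V.R ((H.S.symm a) ⊗ₜ C')) :=
        (X4 ..).symm

include hu in
lemma claimu (hBr : ∀ b : B, (∀ b' : B, b' * b = 0) → b = 0) (a : A) (b : B)
    (ζ' : A ⊗[ℂ] B) :
    ζ' * TensorProduct.map H.S.toLinearMap LinearMap.id (u a b)
      = TensorProduct.map LinearMap.id (mulRight ℂ b)
          (PhiSr H (AQG.leg23 V.R (AQG.swap12
            ((TensorProduct.assoc ℂ A A B).symm ((H.S.symm a) ⊗ₜ ζ'))))) := by
  induction ζ' using TensorProduct.induction_on with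
  | zero =>
      rw [zero_mul, tmul_zero, LinearEquiv.map_zero, LinearEquiv.map_zero,
        map_zero, map_zero, map_zero]
  | tmul X' C' =>
      rw [TensorProduct.assoc_symm_tmul, swap12_apply, leg23_apply, LA6]
      rw [mul_left_eq, ← map_lr, ← map_comm_sq, claimu' H V u hu hBr a b C',
        map_comm_sq, map_comm_sq]
  | add u' v' hu' hv' =>
      rw [add_mul, tmul_add, LinearEquiv.map_add, LinearEquiv.map_add, map_add,
        map_add, map_add, hu', hv']

end uu

end Corep

end AQGPf

end

/-- For a non-degenerate (invertible) corepresentation `V` of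
`(A, Δ)` on `B`: `(S ⊙ ι)(V) = V⁻¹`, where `(S ⊙ ι)(V)` is the multiplier determined by
`(S ⊙ ι)(V)(a ⊗ b) = (S ⊙ ι)((S⁻¹(a) ⊗ 1) V (1 ⊗ b))` and
`(a ⊗ b)(S ⊙ ι)(V) = (S ⊙ ι)((1 ⊗ b) V (S⁻¹(a) ⊗ 1))`. -/
theorem AQG.antipode_slice_inverse {A : Type*} [NonUnitalRing A] [Module ℂ A]
    [SMulCommClass ℂ A A] [IsScalarTower ℂ A A] (H : AQG A)
    {B : Type*} [NonUnitalRing B] [Module ℂ B]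
    [SMulCommClass ℂ B B] [IsScalarTower ℂ B B]
    (hBl : ∀ b : B, (∀ b' : B, b * b' = 0) → b = 0)
    (hBr : ∀ b : B, (∀ b' : B, b' * b = 0) → b = 0)
    (V W : Mult (A ⊗[ℂ] B)) (hV : H.IsCorep V) (hW : V.Inverts W)
    (u v : A → B → A ⊗[ℂ] B)
    -- `u a b = (S⁻¹(a) ⊗ 1) V (1 ⊗ b) ∈ A ⊙ B`
    (hu : ∀ (a : A) (b : B) (z : A ⊗[ℂ] B),
      u a b * z =
        TensorProduct.map (LinearMap.mulLeft ℂ (H.S.symm a)) LinearMap.id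
          (V.L (TensorProduct.map LinearMap.id (LinearMap.mulLeft ℂ b) z)) ∧
      z * u a b =
        TensorProduct.map LinearMap.id (LinearMap.mulRight ℂ b)
          (V.R (TensorProduct.map (LinearMap.mulRight ℂ (H.S.symm a)) LinearMap.id z)))
    -- `v a b = (1 ⊗ b) V (S⁻¹(a) ⊗ 1) ∈ A ⊙ B`
    (hv : ∀ (a : A) (b : B) (z : A ⊗[ℂ] B),
      v a b * z =
        TensorProduct.map LinearMap.id (LinearMap.mulLeft ℂ b)
          (V.L (TensorProduct.map (LinearMap.mulLeft ℂ (H.S.symm a)) LinearMap.id z)) ∧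
      z * v a b =
        TensorProduct.map (LinearMap.mulRight ℂ (H.S.symm a)) LinearMap.id
          (V.R (TensorProduct.map LinearMap.id (LinearMap.mulRight ℂ b) z))) :
    ∀ (a : A) (b : B),
      W.L (a ⊗ₜ b) = TensorProduct.map H.S.toLinearMap LinearMap.id (u a b) ∧
      W.R (a ⊗ₜ b) = TensorProduct.map H.S.toLinearMap LinearMap.id (v a b) := by
  intro a b
  have hVL : V.L (TensorProduct.map H.S.toLinearMap LinearMap.id (u a b)) = a ⊗ₜ b := by
    apply AQGPf.eqAB_l H hBr
    intro X z w
    rw [← V.mid, AQGPf.claimu H V u hu hBr a b (V.R (X ⊗ₜ (z*w)))]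
    have h2 : AQG.swap12 ((TensorProduct.assoc ℂ A A B).symm
          ((H.S.symm a) ⊗ₜ V.R (X ⊗ₜ (z*w))))
        = AQG.leg13 V.R ((X ⊗ₜ (H.S.symm a)) ⊗ₜ (z*w)) := by
      rw [AQGPf.leg13_apply, AQGPf.leg23_apply]
    rw [h2, AQGPf.E2 H V W hBr hV hW X (H.S.symm a) z w,
      LinearEquiv.apply_symm_apply]
    simp only [TensorProduct.map_tmul, LinearMap.id_coe, id_eq,
      LinearMap.mulRight_apply, AQGPf.tmul_mul_tmul]
  have hVR : V.R (TensorProduct.map H.S.toLinearMap LinearMap.id (v a b)) = a ⊗ₜ b := by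
    apply AQGPf.eqAB_r H hBl
    intro Y z w
    rw [V.mid, AQGPf.claimv H V v hv hBl a b (V.L (Y ⊗ₜ (z*w)))]
    have h2 : (TensorProduct.assoc ℂ A A B).symm ((H.S.symm a) ⊗ₜ V.L (Y ⊗ₜ (z*w)))
        = AQG.leg23 V.L (((H.S.symm a) ⊗ₜ Y) ⊗ₜ (z*w)) :=
      (AQGPf.leg23_apply V.L (H.S.symm a) Y (z*w)).symm
    rw [h2, AQGPf.E1 H V W hBl hV hW (H.S.symm a) Y z w,
      LinearEquiv.apply_symm_apply]
    simp only [TensorProduct.map_tmul, LinearMap.id_coe, id_eq,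
      LinearMap.mulLeft_apply, AQGPf.tmul_mul_tmul]
  constructor
  · rw [← hVL, hW.2.1]
  · rw [← hVR, hW.2.2.2]
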